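/- Let k ≥ 1 and let a₁ ≥ b₁ ≥ a₂ ≥ ⋯ ≥ a_k ≥ b_k ≥ a_{k+1} be real numbers. Let y be a k×k complex Hermitian matrix whose characteristic polynomial equals ∏_{i=1}^{k}(X − b_i), and let g ∈ U(k) satisfy g · y · g* = diag(b₁, …, b_k). Then the map x ↦ ι(g) · x · ι(g)* is a bijection from the set { x : x is a (k+1)×(k+1) complex Hermitian matrix, the characteristic polynomial of x equals ∏_{i=1}^{k+1}(X − a_i), and x^{(k)} = y } onto the set { Z_{(a,b)}(z) : z ∈ Ã_{k+1}(a, b) }. -/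
import Mathlib


open Polynomial

/-- The `(k+1) × (k+1)` Hermitian "arrow" matrix whose upper-left `k × k` block is
`diag(b 1, …, b k)`, whose `(i, k+1)` entry is `conj (z i)` and `(k+1, i)` entry is `z i`
for `1 ≤ i ≤ k` (1-based indexing of the sequences), and whose `(k+1, k+1)` entry is `w`. -/
def Zarrow (k : ℕ) (b : ℕ → ℝ) (w : ℝ) (z : ℕ → ℂ) :
    Matrix (Fin (k + 1)) (Fin (k + 1)) ℂ :=
  Matrix.of fun i j =>
    if (i : ℕ) < k then
      if (j : ℕ) < k then (if i = j then (b ((i : ℕ) + 1) : ℂ) else 0)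
      else (starRingEnd ℂ) (z ((i : ℕ) + 1))
    else
      if (j : ℕ) < k then z ((j : ℕ) + 1)
      else (w : ℂ)

/-- The matrix `Z_{(a,b)}(z)`: the arrow matrix with corner entry
`z_{k+1} = Σ_{i=1}^{k+1} aᵢ − Σ_{i=1}^{k} bᵢ`. -/
def Zab (k : ℕ) (a b : ℕ → ℝ) (z : ℕ → ℂ) : Matrix (Fin (k + 1)) (Fin (k + 1)) ℂ :=
  Zarrow k b ((∑ i ∈ Finset.Icc 1 (k + 1), a i) - ∑ i ∈ Finset.Icc 1 k, b i) z

/-- `Ã_{k+1}(a, b)`: those `z` (with relevant coordinates `z 1, …, z k`) for which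
`Z_{(a,b)}(z)` has characteristic polynomial `∏_{i=1}^{k+1}(X − aᵢ)`. -/
def Atilde (k : ℕ) (a b : ℕ → ℝ) : Set (ℕ → ℂ) :=
  {z | (Zab k a b z).charpoly = ∏ i ∈ Finset.Icc 1 (k + 1), (X - C (a i : ℂ))}

open Matrix

/-- `ι(g)`: the `(k+1) × (k+1)` block-diagonal matrix with upper-left `k × k` block `g`
and lower-right entry `1`. -/
def unitaryEmbed (k : ℕ) (g : Matrix (Fin k) (Fin k) ℂ) :
    Matrix (Fin (k + 1)) (Fin (k + 1)) ℂ :=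
  Matrix.of fun i j =>
    if hi : (i : ℕ) < k then
      (if hj : (j : ℕ) < k then g ⟨i, hi⟩ ⟨j, hj⟩ else 0)
    else
      (if (j : ℕ) < k then 0 else 1)

section AuxLemmas

set_option linter.unnecessarySeqFocus false
set_option linter.unusedTactic false

private lemma charpoly_conj_aux {n : Type*} [DecidableEq n] [Fintype n]
    (P Q M : Matrix n n ℂ) (h1 : P * Q = 1) :
    (P * M * Q).charpoly = M.charpoly := by
  have hPQ : P.map (C : ℂ →+* ℂ[X]) * Q.map (C : ℂ →+* ℂ[X]) = 1 := by
    rw [← Matrix.map_mul, h1, Matrix.map_one] <;> simp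
  have key : charmatrix (P * M * Q) =
      P.map (C : ℂ →+* ℂ[X]) * charmatrix M * Q.map (C : ℂ →+* ℂ[X]) := by
    have hm : (C : ℂ →+* ℂ[X]).mapMatrix (P * M * Q)
        = P.map (C : ℂ →+* ℂ[X]) * ((C : ℂ →+* ℂ[X]).mapMatrix M) * Q.map (C : ℂ →+* ℂ[X]) := by
      simp [Matrix.map_mul]
    rw [charmatrix, charmatrix, hm, mul_sub, sub_mul]
    congr 1
    symm
    have hc : Commute (Matrix.scalar n (X : ℂ[X])) (Q.map (C : ℂ →+* ℂ[X])) :=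
      scalar_commute _ (fun r => Commute.all _ _) _
    calc P.map (C : ℂ →+* ℂ[X]) * Matrix.scalar n (X : ℂ[X]) * Q.map (C : ℂ →+* ℂ[X])
        = P.map (C : ℂ →+* ℂ[X]) * (Matrix.scalar n (X : ℂ[X]) * Q.map (C : ℂ →+* ℂ[X])) := by
          rw [mul_assoc]
      _ = P.map (C : ℂ →+* ℂ[X]) * (Q.map (C : ℂ →+* ℂ[X]) * Matrix.scalar n (X : ℂ[X])) := by
          rw [hc.eq]
      _ = (P.map (C : ℂ →+* ℂ[X]) * Q.map (C : ℂ →+* ℂ[X])) * Matrix.scalar n (X : ℂ[X]) := by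
          rw [mul_assoc]
      _ = Matrix.scalar n (X : ℂ[X]) := by rw [hPQ, one_mul]
  have hdet : (P.map (C : ℂ →+* ℂ[X])).det * (Q.map (C : ℂ →+* ℂ[X])).det = 1 := by
    rw [← det_mul, hPQ, det_one]
  rw [Matrix.charpoly, Matrix.charpoly, key, det_mul, det_mul]
  calc (P.map (C : ℂ →+* ℂ[X])).det * (charmatrix M).det * (Q.map (C : ℂ →+* ℂ[X])).det
      = (charmatrix M).det * ((P.map (C : ℂ →+* ℂ[X])).det * (Q.map (C : ℂ →+* ℂ[X])).det) := by
        ring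
    _ = (charmatrix M).det := by rw [hdet, mul_one]

private lemma trace_submatrix_equiv' {m n : Type*} [Fintype m] [Fintype n]
    (f : m ≃ n) (M : Matrix n n ℂ) : (M.submatrix f f).trace = M.trace := by
  simp only [Matrix.trace, Matrix.diag, Matrix.submatrix_apply]
  exact Fintype.sum_equiv f _ _ (fun i => rfl)

private lemma trace_fromBlocks' {m n : Type*} [Fintype m] [Fintype n]
    (A : Matrix m m ℂ) (B : Matrix m n ℂ) (C' : Matrix n m ℂ) (D : Matrix n n ℂ) :
    (Matrix.fromBlocks A B C' D).trace = A.trace + D.trace := by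
  simp [Matrix.trace, Matrix.diag, Fintype.sum_sum_type, Matrix.fromBlocks]

private lemma embed_eq (k : ℕ) (g : Matrix (Fin k) (Fin k) ℂ) :
    unitaryEmbed k g = (Matrix.fromBlocks g 0 0 1).submatrix
      ⇑(finSumFinEquiv (m := k) (n := 1)).symm ⇑(finSumFinEquiv (m := k) (n := 1)).symm := by
  ext i j
  obtain ⟨p, rfl⟩ := finSumFinEquiv.surjective i
  obtain ⟨q, rfl⟩ := finSumFinEquiv.surjective j
  rcases p with p | p <;> rcases q with q | q <;>
    simp [unitaryEmbed, Matrix.submatrix_apply, p.isLt, Matrix.one_apply, Fin.ext_iff]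

private lemma zarrow_decomp (k : ℕ) (b : ℕ → ℝ) (w : ℝ) (z : ℕ → ℂ) :
    Zarrow k b w z = (Matrix.fromBlocks
      (Matrix.diagonal fun i : Fin k => (b ((i : ℕ) + 1) : ℂ))
      (Matrix.of fun i (_ : Fin 1) => (starRingEnd ℂ) (z ((i : ℕ) + 1)))
      (Matrix.of fun (_ : Fin 1) j => z ((j : ℕ) + 1))
      (Matrix.of fun _ _ => (w : ℂ))).submatrix
      ⇑(finSumFinEquiv (m := k) (n := 1)).symm ⇑(finSumFinEquiv (m := k) (n := 1)).symm := by
  ext i j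
  obtain ⟨p, rfl⟩ := finSumFinEquiv.surjective i
  obtain ⟨q, rfl⟩ := finSumFinEquiv.surjective j
  rcases p with p | p <;> rcases q with q | q <;>
    simp [Zarrow, Matrix.submatrix_apply, p.isLt, Matrix.diagonal_apply, Fin.ext_iff]

private lemma matrix_decomp (k : ℕ) (x : Matrix (Fin (k + 1)) (Fin (k + 1)) ℂ) :
    x = (Matrix.fromBlocks
      (x.submatrix Fin.castSucc Fin.castSucc)
      (Matrix.of fun i (_ : Fin 1) => x i.castSucc (Fin.last k))
      (Matrix.of fun (_ : Fin 1) j => x (Fin.last k) j.castSucc)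
      (Matrix.of fun _ _ => x (Fin.last k) (Fin.last k))).submatrix
      ⇑(finSumFinEquiv (m := k) (n := 1)).symm ⇑(finSumFinEquiv (m := k) (n := 1)).symm := by
  ext i j
  obtain ⟨p, rfl⟩ := finSumFinEquiv.surjective i
  obtain ⟨q, rfl⟩ := finSumFinEquiv.surjective j
  have hr : ∀ q : Fin 1, finSumFinEquiv (Sum.inr q : Fin k ⊕ Fin 1) = Fin.last k := by
    intro q; ext; simp [Fin.last]
  have hcs : ∀ p : Fin k, Fin.castAdd 1 p = p.castSucc := fun p => rfl
  simp only [Matrix.submatrix_apply, Equiv.symm_apply_apply]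
  rcases p with p | p <;> rcases q with q | q <;>
    simp [hr, hcs]

private lemma embed_conjT (k : ℕ) (g : Matrix (Fin k) (Fin k) ℂ) :
    (unitaryEmbed k g)ᴴ = unitaryEmbed k gᴴ := by
  rw [embed_eq, embed_eq, Matrix.conjTranspose_submatrix, Matrix.fromBlocks_conjTranspose,
    Matrix.conjTranspose_zero, Matrix.conjTranspose_zero, Matrix.conjTranspose_one]

private lemma embed_mul (k : ℕ) (g h : Matrix (Fin k) (Fin k) ℂ) :
    unitaryEmbed k g * unitaryEmbed k h = unitaryEmbed k (g * h) := by
  rw [embed_eq, embed_eq, embed_eq, Matrix.submatrix_mul_equiv, Matrix.fromBlocks_multiply]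
  congr 1 <;> simp

private lemma embed_one (k : ℕ) : unitaryEmbed k (1 : Matrix (Fin k) (Fin k) ℂ) = 1 := by
  rw [embed_eq, Matrix.fromBlocks_one, Matrix.submatrix_one_equiv]

private lemma conj_blocks (k : ℕ) (g A : Matrix (Fin k) (Fin k) ℂ) (B : Matrix (Fin k) (Fin 1) ℂ)
    (C' : Matrix (Fin 1) (Fin k) ℂ) (D : Matrix (Fin 1) (Fin 1) ℂ) :
    unitaryEmbed k g *
        (Matrix.fromBlocks A B C' D).submatrix
          ⇑(finSumFinEquiv (m := k) (n := 1)).symm ⇑(finSumFinEquiv (m := k) (n := 1)).symm *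
        (unitaryEmbed k g)ᴴ =
      (Matrix.fromBlocks (g * A * gᴴ) (g * B) (C' * gᴴ) D).submatrix
        ⇑(finSumFinEquiv (m := k) (n := 1)).symm ⇑(finSumFinEquiv (m := k) (n := 1)).symm := by
  rw [embed_conjT, embed_eq, embed_eq, Matrix.submatrix_mul_equiv, Matrix.submatrix_mul_equiv,
    Matrix.fromBlocks_multiply, Matrix.fromBlocks_multiply]
  congr 1 <;> simp [Matrix.mul_assoc]

private lemma cancel_conj (k : ℕ) (P Q M : Matrix (Fin (k + 1)) (Fin (k + 1)) ℂ)
    (h : P * Q = 1) : P * (Q * M * P) * Q = M := by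
  rw [show P * (Q * M * P) * Q = (P * Q) * M * (P * Q) from by
    simp only [← Matrix.mul_assoc], h, one_mul, mul_one]

private lemma zarrow_herm (k : ℕ) (b : ℕ → ℝ) (w : ℝ) (z : ℕ → ℂ) :
    (Zarrow k b w z).IsHermitian := by
  ext i j
  simp only [Matrix.conjTranspose_apply, Zarrow, Matrix.of_apply]
  by_cases hi : (i : ℕ) < k <;> by_cases hj : (j : ℕ) < k <;>
    simp only [hi, hj, if_true, if_false, ite_true, ite_false]
  · by_cases hij : i = j
    · subst hij; simp
    · simp [hij, Ne.symm hij, fun h : j = i => hij h.symm]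
  · simp
  · simp
  · simp

end AuxLemmas

/-- Let `y` be a `k × k` Hermitian matrix with characteristic polynomial
`∏_{i=1}^{k}(X − bᵢ)` and `g ∈ U(k)` with `g y g* = diag(b₁, …, b_k)`.  Then
`x ↦ ι(g) x ι(g)*` is a bijection from the set of `(k+1) × (k+1)` Hermitian matrices with
characteristic polynomial `∏_{i=1}^{k+1}(X − aᵢ)` and `k × k` leading principal submatrix `y`
onto `{ Z_{(a,b)}(z) : z ∈ Ã_{k+1}(a,b) }`. -/
theorem statement13 (k : ℕ) (hk : 1 ≤ k) (a b : ℕ → ℝ)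
    (hab : ∀ i, 1 ≤ i → i ≤ k → b i ≤ a i ∧ a (i + 1) ≤ b i)
    (y : Matrix (Fin k) (Fin k) ℂ) (hy : y.IsHermitian)
    (hyb : y.charpoly = ∏ i ∈ Finset.Icc 1 k, (X - C (b i : ℂ)))
    (g : Matrix (Fin k) (Fin k) ℂ) (hg : g ∈ Matrix.unitaryGroup (Fin k) ℂ)
    (hgy : g * y * gᴴ = Matrix.diagonal fun i : Fin k => (b ((i : ℕ) + 1) : ℂ)) :
    Set.BijOn (fun x => unitaryEmbed k g * x * (unitaryEmbed k g)ᴴ)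
      {x : Matrix (Fin (k + 1)) (Fin (k + 1)) ℂ |
        x.IsHermitian ∧
        x.charpoly = ∏ i ∈ Finset.Icc 1 (k + 1), (X - C (a i : ℂ)) ∧
        x.submatrix Fin.castSucc Fin.castSucc = y}
      {m : Matrix (Fin (k + 1)) (Fin (k + 1)) ℂ | ∃ z ∈ Atilde k a b, Zab k a b z = m} := by
  classical
  have hg1 : g * gᴴ = 1 := by
    have := (Matrix.mem_unitaryGroup_iff).mp hg
    simpa [Matrix.star_eq_conjTranspose] using this
  have hg2 : gᴴ * g = 1 := by
    have := (Matrix.mem_unitaryGroup_iff').mp hg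
    simpa [Matrix.star_eq_conjTranspose] using this
  set G := unitaryEmbed k g with hG
  have hG1 : G * Gᴴ = 1 := by
    rw [hG, embed_conjT, embed_mul, hg1, embed_one]
  have hG2 : Gᴴ * G = 1 := by
    rw [hG, embed_conjT, embed_mul, hg2, embed_one]
  -- trace of y
  haveI : Nonempty (Fin k) := ⟨⟨0, hk⟩⟩
  have htry : y.trace = ∑ i ∈ Finset.Icc 1 k, (b i : ℂ) := by
    rw [Matrix.trace_eq_neg_charpoly_coeff, hyb]
    have hcard : (Finset.Icc 1 k).card = k := by
      rw [Nat.card_Icc]; omega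
    have hc2 := Polynomial.prod_X_sub_C_coeff_card_pred (Finset.Icc 1 k) (fun i => (b i : ℂ))
      (by rw [hcard]; omega)
    rw [hcard] at hc2
    rw [Fintype.card_fin, hc2]
    simp
  -- the target trace
  have hsum_card : (Finset.Icc 1 (k + 1)).card = k + 1 := by
    rw [Nat.card_Icc]; omega
  -- trace of any matrix with the given charpoly
  have htrx : ∀ x : Matrix (Fin (k + 1)) (Fin (k + 1)) ℂ,
      x.charpoly = ∏ i ∈ Finset.Icc 1 (k + 1), (X - C (a i : ℂ)) →
      x.trace = ∑ i ∈ Finset.Icc 1 (k + 1), (a i : ℂ) := by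
    intro x hx
    rw [Matrix.trace_eq_neg_charpoly_coeff, hx]
    have hc2 := Polynomial.prod_X_sub_C_coeff_card_pred (Finset.Icc 1 (k + 1))
      (fun i => (a i : ℂ)) (by rw [hsum_card]; omega)
    rw [hsum_card] at hc2
    rw [Fintype.card_fin, hc2]
    simp
  constructor
  · -- MapsTo
    rintro x ⟨hx1, hx2, hx3⟩
    -- blocks of x
    set Bx : Matrix (Fin k) (Fin 1) ℂ :=
      Matrix.of fun i (_ : Fin 1) => x i.castSucc (Fin.last k) with hBx
    set Cx : Matrix (Fin 1) (Fin k) ℂ :=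
      Matrix.of fun (_ : Fin 1) j => x (Fin.last k) j.castSucc with hCx
    set Dx : Matrix (Fin 1) (Fin 1) ℂ :=
      Matrix.of fun _ _ => x (Fin.last k) (Fin.last k) with hDx
    have hxdec : x = (Matrix.fromBlocks y Bx Cx Dx).submatrix
        ⇑(finSumFinEquiv (m := k) (n := 1)).symm ⇑(finSumFinEquiv (m := k) (n := 1)).symm := by
      conv_lhs => rw [matrix_decomp k x]
      rw [hx3]
    have hconj : G * x * Gᴴ = (Matrix.fromBlocks
        (Matrix.diagonal fun i : Fin k => (b ((i : ℕ) + 1) : ℂ)) (g * Bx) (Cx * gᴴ) Dx).submatrix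
        ⇑(finSumFinEquiv (m := k) (n := 1)).symm ⇑(finSumFinEquiv (m := k) (n := 1)).symm := by
      conv_lhs => rw [hxdec]
      rw [hG, conj_blocks, hgy]
    -- Hermitian relations between blocks
    have hBC : Bx = Cxᴴ := by
      ext i j
      simp only [hBx, hCx, Matrix.of_apply, Matrix.conjTranspose_apply]
      exact (hx1.apply i.castSucc (Fin.last k)).symm
    -- corner entry via traces
    have hcorner : x (Fin.last k) (Fin.last k) =
        (((∑ i ∈ Finset.Icc 1 (k + 1), a i) - ∑ i ∈ Finset.Icc 1 k, b i : ℝ) : ℂ) := by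
      have ht1 : x.trace = y.trace + x (Fin.last k) (Fin.last k) := by
        conv_lhs => rw [hxdec]
        rw [trace_submatrix_equiv', trace_fromBlocks']
        congr 1
        simp [Matrix.trace, Matrix.diag, hDx]
      have ht2 := htrx x hx2
      rw [ht2, htry] at ht1
      push_cast
      linear_combination -ht1
    -- define z
    set z : ℕ → ℂ := fun n =>
      if h : 1 ≤ n ∧ n ≤ k then (Cx * gᴴ) 0 ⟨n - 1, by omega⟩ else 0 with hz
    have hzval : ∀ i : Fin k, z ((i : ℕ) + 1) = (Cx * gᴴ) 0 i := by
      intro i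
      have h : 1 ≤ (i : ℕ) + 1 ∧ (i : ℕ) + 1 ≤ k := ⟨by omega, i.isLt⟩
      rw [hz]
      simp only [h, and_self, dif_pos]
      congr 1
    have hgB : g * Bx = (Cx * gᴴ)ᴴ := by
      rw [Matrix.conjTranspose_mul, Matrix.conjTranspose_conjTranspose, ← hBC]
    have hBblock : (Matrix.of fun (i : Fin k) (_ : Fin 1) => (starRingEnd ℂ) (z ((i : ℕ) + 1)))
        = g * Bx := by
      ext i j
      rw [hgB, Matrix.conjTranspose_apply, Subsingleton.elim j (0 : Fin 1)]
      show (starRingEnd ℂ) (z ((i : ℕ) + 1)) = star ((Cx * gᴴ) 0 i)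
      rw [hzval i]
      rfl
    have hCblock : (Matrix.of fun (_ : Fin 1) (j : Fin k) => z ((j : ℕ) + 1)) = Cx * gᴴ := by
      ext i j
      rw [Subsingleton.elim i (0 : Fin 1)]
      exact hzval j
    have hDblock : (Matrix.of fun (_ _ : Fin 1) =>
        ((((∑ i ∈ Finset.Icc 1 (k + 1), a i) - ∑ i ∈ Finset.Icc 1 k, b i : ℝ)) : ℂ)) = Dx := by
      ext i j
      show ((((∑ i ∈ Finset.Icc 1 (k + 1), a i) - ∑ i ∈ Finset.Icc 1 k, b i : ℝ)) : ℂ) = Dx i j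
      rw [hDx]
      exact hcorner.symm
    have hZm : Zab k a b z = G * x * Gᴴ := by
      rw [hconj, Zab, zarrow_decomp, hBblock, hCblock, hDblock]
    refine ⟨z, ?_, hZm⟩
    -- z ∈ Atilde
    have : (Zab k a b z).charpoly = x.charpoly := by
      rw [hZm]
      exact charpoly_conj_aux G Gᴴ x hG1
    rw [Atilde, Set.mem_setOf_eq, this, hx2]
  constructor
  · -- InjOn
    intro x1 _ x2 _ h
    simp only at h
    have h1 : Gᴴ * (G * x1 * Gᴴ) * G = Gᴴ * (G * x2 * Gᴴ) * G := by rw [h]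
    rwa [cancel_conj k Gᴴ G x1 hG2, cancel_conj k Gᴴ G x2 hG2] at h1
  · -- SurjOn
    rintro m ⟨z, hzA, hzm⟩
    refine ⟨Gᴴ * m * G, ⟨?_, ?_, ?_⟩, ?_⟩
    · -- Hermitian
      have hm : m.IsHermitian := by
        rw [← hzm]
        exact zarrow_herm k b _ z
      unfold Matrix.IsHermitian
      rw [Matrix.conjTranspose_mul, Matrix.conjTranspose_mul,
        Matrix.conjTranspose_conjTranspose, hm.eq, Matrix.mul_assoc]
    · -- charpoly
      rw [charpoly_conj_aux Gᴴ G m hG2, ← hzm, hzA]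
    · -- submatrix
      have hGH : Gᴴ = unitaryEmbed k gᴴ := by rw [hG, embed_conjT]
      have hGHH : (unitaryEmbed k gᴴ)ᴴ = G := by
        rw [embed_conjT, Matrix.conjTranspose_conjTranspose, hG]
      have hmdec : m = (Matrix.fromBlocks
          (Matrix.diagonal fun i : Fin k => (b ((i : ℕ) + 1) : ℂ))
          (Matrix.of fun i (_ : Fin 1) => (starRingEnd ℂ) (z ((i : ℕ) + 1)))
          (Matrix.of fun (_ : Fin 1) j => z ((j : ℕ) + 1))
          (Matrix.of fun _ _ =>
            (((∑ i ∈ Finset.Icc 1 (k + 1), a i) - ∑ i ∈ Finset.Icc 1 k, b i : ℝ) : ℂ))).submatrix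
          ⇑(finSumFinEquiv (m := k) (n := 1)).symm ⇑(finSumFinEquiv (m := k) (n := 1)).symm := by
        rw [← hzm, Zab, zarrow_decomp]
      have : Gᴴ * m * G = (Matrix.fromBlocks
          (gᴴ * (Matrix.diagonal fun i : Fin k => (b ((i : ℕ) + 1) : ℂ)) * g)
          (gᴴ * (Matrix.of fun (i : Fin k) (_ : Fin 1) => (starRingEnd ℂ) (z ((i : ℕ) + 1))))
          ((Matrix.of fun (_ : Fin 1) (j : Fin k) => z ((j : ℕ) + 1)) * g)
          (Matrix.of fun _ _ =>
            (((∑ i ∈ Finset.Icc 1 (k + 1), a i) - ∑ i ∈ Finset.Icc 1 k, b i : ℝ) : ℂ))).submatrix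
          ⇑(finSumFinEquiv (m := k) (n := 1)).symm ⇑(finSumFinEquiv (m := k) (n := 1)).symm := by
        conv_lhs => rw [hmdec, hGH, ← hGHH]
        rw [conj_blocks, Matrix.conjTranspose_conjTranspose]
      rw [this]
      have hA : gᴴ * (Matrix.diagonal fun i : Fin k => (b ((i : ℕ) + 1) : ℂ)) * g = y := by
        rw [← hgy]
        calc gᴴ * (g * y * gᴴ) * g = (gᴴ * g) * y * (gᴴ * g) := by
              simp only [← Matrix.mul_assoc]
          _ = y := by rw [hg2, one_mul, mul_one]
      -- extract the ₁₁ block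
      ext i j
      have hls : (finSumFinEquiv (m := k) (n := 1)).symm i.castSucc = Sum.inl i :=
        finSumFinEquiv.symm_apply_apply (Sum.inl i)
      have hls' : (finSumFinEquiv (m := k) (n := 1)).symm j.castSucc = Sum.inl j :=
        finSumFinEquiv.symm_apply_apply (Sum.inl j)
      rw [Matrix.submatrix_apply, Matrix.submatrix_apply, hls, hls',
        Matrix.fromBlocks_apply₁₁, hA]
    · -- maps back to m
      show G * (Gᴴ * m * G) * Gᴴ = m
      exact cancel_conj k G Gᴴ m hG1
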